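/- Let (h_k) be a sequence of pairwise disjoint measurable subsets of (0,1) with λ(h_k) = 2^{−k−2^k} for k ≥ 1, and let x = ∑_{k≥1} 2^{2^k} χ_{h_k}. Then there is a constant C > 0 such that C⁻¹/log(e/t) ≤ ∫₀¹ min{x(s), t·x(s)²} ds ≤ C/log(e/t) for all 0 < t ≤ 1. -/

import Mathlib

open MeasureTheory Set
open scoped ENNReal NNReal

noncomputable section

lemma key_eq
    (h : ℕ → Set ℝ)
    (hmeas : ∀ k, MeasurableSet (h k))
    (hsub : ∀ k, h k ⊆ Ioo (0:ℝ) 1)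
    (hdisj : Pairwise (Function.onFun Disjoint h))
    (hvol : ∀ k : ℕ, 1 ≤ k →
      volume (h k) = ENNReal.ofReal ((2:ℝ) ^ (-(k:ℝ) - (2:ℝ) ^ (k:ℝ))))
    (x : ℝ → ℝ)
    (hx : ∀ s, x s =
      ∑' k : ℕ, (2:ℝ) ^ ((2:ℝ) ^ ((k:ℝ) + 1)) * (h (k + 1)).indicator (fun _ => (1:ℝ)) s)
    (t : ℝ) (ht : 0 < t) :
    (∫ s in Ioo (0:ℝ) 1, min (x s) (t * x s ^ 2)) =
      ∑' i : ℕ, min ((2:ℝ)^(-((i:ℝ)+1))) (t * (2:ℝ)^((2:ℝ)^((i:ℝ)+1) - ((i:ℝ)+1))) := by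
  set a : ℕ → ℝ := fun i => (2:ℝ) ^ ((2:ℝ) ^ ((i:ℝ) + 1)) with ha_def
  have ha_pos : ∀ i, 0 < a i := fun i => Real.rpow_pos_of_pos two_pos _
  set c : ℕ → ℝ := fun i => min (a i) (t * a i ^ 2) with hc_def
  have hc_pos : ∀ i, 0 < c i := fun i =>
    lt_min (ha_pos i) (mul_pos ht (pow_pos (ha_pos i) 2))
  set F : ℕ → ℝ → ℝ := fun i => (h (i+1)).indicator (fun _ => c i) with hF_def
  -- pointwise values of x
  have hx_mem : ∀ j s, s ∈ h (j+1) → x s = a j := by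
    intro j s hs
    rw [hx s]
    rw [tsum_eq_single j]
    · simp [indicator_of_mem hs]; rfl
    · intro k hk
      have hns : s ∉ h (k+1) := by
        intro hs'
        exact Set.disjoint_left.mp (hdisj (show k+1 ≠ j+1 by omega)) hs' hs
      simp [indicator_of_notMem hns]
  have hx_nmem : ∀ s, (∀ j, s ∉ h (j+1)) → x s = 0 := by
    intro s hs
    rw [hx s]
    simp [indicator_of_notMem (hs _)]
  -- pointwise identity for the integrand
  have hpt : ∀ s, min (x s) (t * x s ^ 2) = ∑' i, F i s := by
    intro s
    by_cases hs : ∃ j, s ∈ h (j+1)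
    · obtain ⟨j, hj⟩ := hs
      rw [hx_mem j s hj]
      rw [tsum_eq_single j]
      · simp [hF_def, indicator_of_mem hj, hc_def]
      · intro k hk
        have hns : s ∉ h (k+1) := by
          intro hs'
          exact Set.disjoint_left.mp (hdisj (show k+1 ≠ j+1 by omega)) hs' hj
        simp [hF_def, indicator_of_notMem hns]
    · push_neg at hs
      rw [hx_nmem s hs]
      simp [hF_def, indicator_of_notMem (hs _)]
  -- measure of each set
  have hμ : ∀ i : ℕ, (volume.restrict (Ioo (0:ℝ) 1)) (h (i+1)) =
      ENNReal.ofReal ((2:ℝ) ^ (-((i:ℝ)+1) - (2:ℝ) ^ ((i:ℝ)+1))) := by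
    intro i
    rw [Measure.restrict_apply (hmeas _),
      inter_eq_self_of_subset_left (hsub _), hvol (i+1) (by omega)]
    push_cast
    ring_nf
  have hμval_pos : ∀ i : ℕ, (0:ℝ) < (2:ℝ) ^ (-((i:ℝ)+1) - (2:ℝ) ^ ((i:ℝ)+1)) :=
    fun i => Real.rpow_pos_of_pos two_pos _
  -- product simplifications
  have hprod1 : ∀ i : ℕ, (2:ℝ) ^ (-((i:ℝ)+1) - (2:ℝ) ^ ((i:ℝ)+1)) * a i
      = (2:ℝ)^(-((i:ℝ)+1)) := by
    intro i
    rw [ha_def, ← Real.rpow_add two_pos]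
    ring_nf
  have hprod2 : ∀ i : ℕ, (2:ℝ) ^ (-((i:ℝ)+1) - (2:ℝ) ^ ((i:ℝ)+1)) * (t * a i ^ 2)
      = t * (2:ℝ)^((2:ℝ)^((i:ℝ)+1) - ((i:ℝ)+1)) := by
    intro i
    have : a i ^ 2 = a i * a i := sq (a i) ▸ rfl
    rw [this, ha_def, ← Real.rpow_add two_pos, mul_comm t, ← mul_assoc,
      ← Real.rpow_add two_pos]
    ring_nf
  -- geometric majorant
  have hgeom : Summable (fun i : ℕ => ((1:ℝ)/2)^(i+1)) := by
    exact (summable_nat_add_iff 1).mpr summable_geometric_two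
  have hq_eq : ∀ i : ℕ, (2:ℝ)^(-((i:ℝ)+1)) = ((1:ℝ)/2)^(i+1) := by
    intro i
    rw [show ((i:ℝ)+1) = ((i+1 : ℕ) : ℝ) by push_cast; ring,
      Real.rpow_neg two_pos.le, Real.rpow_natCast]
    simp [one_div, inv_pow]
  have hF_meas : ∀ i, AEStronglyMeasurable (F i) (volume.restrict (Ioo (0:ℝ) 1)) :=
    fun i => (stronglyMeasurable_const.indicator (hmeas (i+1))).aestronglyMeasurable
  have hlint : ∀ i, ∫⁻ s, ‖F i s‖₊ ∂(volume.restrict (Ioo (0:ℝ) 1)) =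
      ENNReal.ofReal (c i) * ENNReal.ofReal ((2:ℝ) ^ (-((i:ℝ)+1) - (2:ℝ) ^ ((i:ℝ)+1))) := by
    intro i
    have heq : (fun s => (‖F i s‖₊ : ℝ≥0∞)) =
        (h (i+1)).indicator (fun _ => ENNReal.ofReal (c i)) := by
      ext s
      by_cases hs : s ∈ h (i+1) <;>
        simp [hF_def, indicator, hs, ← enorm_eq_nnnorm, Real.enorm_eq_ofReal (hc_pos i).le]
    rw [heq, lintegral_indicator_const (hmeas _), hμ i]
  have hbound : ∑' i, ∫⁻ s, ‖F i s‖₊ ∂(volume.restrict (Ioo (0:ℝ) 1)) ≠ ⊤ := by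
    have hle : ∀ i, ∫⁻ s, ‖F i s‖₊ ∂(volume.restrict (Ioo (0:ℝ) 1)) ≤
        ENNReal.ofReal (((1:ℝ)/2)^(i+1)) := by
      intro i
      rw [hlint i, ← ENNReal.ofReal_mul (hc_pos i).le]
      apply ENNReal.ofReal_le_ofReal
      calc c i * (2:ℝ) ^ (-((i:ℝ)+1) - (2:ℝ) ^ ((i:ℝ)+1))
          ≤ a i * (2:ℝ) ^ (-((i:ℝ)+1) - (2:ℝ) ^ ((i:ℝ)+1)) :=
            mul_le_mul_of_nonneg_right (min_le_left _ _) (hμval_pos i).le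
        _ = ((1:ℝ)/2)^(i+1) := by rw [mul_comm, hprod1 i, hq_eq i]
    refine ne_top_of_le_ne_top ?_ (ENNReal.tsum_le_tsum hle)
    rw [← ENNReal.ofReal_tsum_of_nonneg (fun i => by positivity) hgeom]
    exact ENNReal.ofReal_ne_top
  calc (∫ s in Ioo (0:ℝ) 1, min (x s) (t * x s ^ 2))
      = ∫ s in Ioo (0:ℝ) 1, ∑' i, F i s := by
        apply integral_congr_ae
        exact Filter.Eventually.of_forall hpt
    _ = ∑' i, ∫ s in Ioo (0:ℝ) 1, F i s := integral_tsum hF_meas hbound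
    _ = ∑' i : ℕ, min ((2:ℝ)^(-((i:ℝ)+1))) (t * (2:ℝ)^((2:ℝ)^((i:ℝ)+1) - ((i:ℝ)+1))) := by
        apply tsum_congr
        intro i
        rw [hF_def]
        rw [integral_indicator_const (c i) (hmeas _), measureReal_def, hμ i,
          ENNReal.toReal_ofReal (hμval_pos i).le, smul_eq_mul, hc_def]
        rw [mul_comm, min_mul_of_nonneg _ _ (hμval_pos i).le,
          mul_comm (a i), mul_comm (t * a i ^ 2), hprod1 i, hprod2 i]


lemma headsum (n : ℕ) : ∑ i ∈ Finset.range (n+1), (2:ℝ)^((2^(i+1) - (i+1) : ℕ)) ≤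
    2 * 2^((2^(n+1) - (n+1) : ℕ)) := by
  induction n with
  | zero => norm_num
  | succ n ih =>
    rw [Finset.sum_range_succ]
    have he : (2^(n+1) - (n+1) : ℕ) + 1 ≤ (2^(n+2) - (n+2) : ℕ) := by
      have h1 : n+1 < 2^(n+1) := Nat.lt_two_pow_self (n := n+1)
      have h2 : 2^(n+2) = 2 * 2^(n+1) := by ring
      omega
    have h2 : (2:ℝ) * 2^((2^(n+1) - (n+1) : ℕ)) ≤ 2^((2^(n+2) - (n+2) : ℕ)) := by
      rw [show (2:ℝ) * 2^((2^(n+1) - (n+1) : ℕ)) = 2^((2^(n+1) - (n+1) : ℕ) + 1) by ring]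
      exact pow_le_pow_right₀ one_le_two he
    have h3 : (0:ℝ) < 2^((2^(n+2) - (n+2) : ℕ)) := by positivity
    nlinarith [ih]

set_option maxHeartbeats 1000000 in
lemma tsum_bounds (t : ℝ) (ht : 0 < t) (ht1 : t ≤ 1) :
    (100:ℝ)⁻¹ / Real.log (Real.exp 1 / t) ≤
      (∑' i : ℕ, min ((2:ℝ)^(-((i:ℝ)+1))) (t * (2:ℝ)^((2:ℝ)^((i:ℝ)+1) - ((i:ℝ)+1)))) ∧
    (∑' i : ℕ, min ((2:ℝ)^(-((i:ℝ)+1))) (t * (2:ℝ)^((2:ℝ)^((i:ℝ)+1) - ((i:ℝ)+1)))) ≤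
      100 / Real.log (Real.exp 1 / t) := by
  set q : ℕ → ℝ := fun i => (2:ℝ)^(-((i:ℝ)+1)) with hq_def
  set r : ℕ → ℝ := fun i => (2:ℝ)^((2:ℝ)^((i:ℝ)+1) - ((i:ℝ)+1)) with hr_def
  set f : ℕ → ℝ := fun i => min (q i) (t * r i) with hf_def
  have hq_eq : ∀ i : ℕ, q i = ((1:ℝ)/2)^(i+1) := by
    intro i
    show (2:ℝ)^(-((i:ℝ)+1)) = ((1:ℝ)/2)^(i+1)
    rw [show (-((i:ℝ)+1)) = -((i+1 : ℕ) : ℝ) by push_cast; ring,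
      Real.rpow_neg two_pos.le, Real.rpow_natCast]
    simp [one_div, inv_pow]
  have hf_nonneg : ∀ i, 0 ≤ f i := fun i =>
    le_min (Real.rpow_pos_of_pos two_pos _).le
      (mul_pos ht (Real.rpow_pos_of_pos two_pos _)).le
  have hf_le_q : ∀ i, f i ≤ q i := fun i => min_le_left _ _
  have hgeom : Summable (fun i : ℕ => ((1:ℝ)/2)^(i+1)) :=
    (summable_nat_add_iff 1).mpr summable_geometric_two
  have hgeom_sum : ∑' i : ℕ, ((1:ℝ)/2)^(i+1) = 1 := by
    have h0 := Summable.sum_add_tsum_nat_add (f := fun i : ℕ => ((1:ℝ)/2)^i) 1 summable_geometric_two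
    have h1 : ∑' i : ℕ, ((1:ℝ)/2)^i = 2 := by
      rw [tsum_geometric_of_lt_one (by norm_num) (by norm_num)]; norm_num
    simp only [Finset.sum_range_one, pow_zero] at h0
    linarith
  have hsum : Summable f :=
    Summable.of_nonneg_of_le hf_nonneg (fun i => (hf_le_q i).trans (hq_eq i).le) hgeom
  -- logs
  set ℓ : ℝ := Real.log (Real.exp 1 / t) with hl_def
  have hℓ : ℓ = 1 - Real.log t := by
    rw [hl_def, Real.log_div (Real.exp_ne_zero 1) (ne_of_gt ht), Real.log_exp]
  have hℓ1 : 1 ≤ ℓ := by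
    have := Real.log_nonpos ht.le ht1
    linarith
  have hℓpos : 0 < ℓ := lt_of_lt_of_le zero_lt_one hℓ1
  set L : ℝ := Real.logb 2 t⁻¹ with hL_def
  have hL0 : 0 ≤ L :=
    Real.logb_nonneg one_lt_two (one_le_inv_iff₀.mpr ⟨ht, ht1⟩)
  have hlog2_pos : (0:ℝ) < Real.log 2 := Real.log_pos one_lt_two
  have hLℓ : ℓ = 1 + L * Real.log 2 := by
    rw [hℓ, hL_def, Real.logb, Real.log_inv]
    field_simp
    ring
  clear_value ℓ L
  -- choice of J
  set J : ℕ := max 1 (Nat.clog 2 ⌈L⌉₊) with hJ_def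
  have hJ1 : 1 ≤ J := le_max_left _ _
  have hJlow : L ≤ (2:ℝ)^J := by
    have h1 : L ≤ (⌈L⌉₊ : ℝ) := Nat.le_ceil L
    have h2 : (⌈L⌉₊ : ℕ) ≤ 2^(Nat.clog 2 ⌈L⌉₊) := Nat.le_pow_clog one_lt_two _
    have h3 : (2:ℕ)^(Nat.clog 2 ⌈L⌉₊) ≤ 2^J :=
      Nat.pow_le_pow_right (by norm_num) (le_max_right _ _)
    calc L ≤ (⌈L⌉₊:ℝ) := h1
      _ ≤ ((2^(Nat.clog 2 ⌈L⌉₊) : ℕ) : ℝ) := by exact_mod_cast h2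
      _ ≤ ((2^J : ℕ):ℝ) := by exact_mod_cast h3
      _ = (2:ℝ)^J := by push_cast; ring
  have hJhigh : (2:ℝ)^J ≤ 2*L + 2 := by
    by_cases hc : Nat.clog 2 ⌈L⌉₊ ≤ 1
    · have hJeq : J = 1 := by rw [hJ_def]; omega
      rw [hJeq]; norm_num; linarith
    · push_neg at hc
      have hJeq : J = Nat.clog 2 ⌈L⌉₊ := max_eq_right (by omega)
      have hceil : 1 < ⌈L⌉₊ := by
        by_contra hh
        push_neg at hh
        have h4 : Nat.clog 2 ⌈L⌉₊ ≤ Nat.clog 2 1 := Nat.clog_mono_right 2 hh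
        simp [Nat.clog_one_right] at h4
        omega
      have hp := Nat.pow_pred_clog_lt_self one_lt_two hceil
      have hceilR : (⌈L⌉₊ : ℝ) < L + 1 := Nat.ceil_lt_add_one hL0
      have hcast : ((2:ℝ)^((Nat.clog 2 ⌈L⌉₊).pred)) < L + 1 := by
        have : (((2:ℕ)^((Nat.clog 2 ⌈L⌉₊).pred) : ℕ) : ℝ) < (⌈L⌉₊ : ℝ) := by
          exact_mod_cast hp
        push_cast at this
        linarith
      have hJpred : J = (Nat.clog 2 ⌈L⌉₊).pred + 1 := by
        rw [hJeq]
        exact (Nat.succ_pred_eq_of_pos (by omega)).symm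
      calc (2:ℝ)^J = 2 * (2:ℝ)^((Nat.clog 2 ⌈L⌉₊).pred) := by rw [hJpred]; ring
        _ ≤ 2*L+2 := by linarith
  have hcast1 : ((J-1:ℕ):ℝ) + 1 = (J:ℝ) := by
    rw [Nat.cast_sub hJ1]; push_cast; ring
  have h2Jpos : (0:ℝ) < (2:ℝ)^J := by positivity
  -- value of f at J-1
  have hfJ : f (J-1) = ((2:ℝ)^J)⁻¹ := by
    have hqJ : q (J-1) = ((2:ℝ)^J)⁻¹ := by
      rw [hq_def]
      show (2:ℝ)^(-(((J-1:ℕ):ℝ)+1)) = ((2:ℝ)^J)⁻¹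
      rw [hcast1, Real.rpow_neg two_pos.le, Real.rpow_natCast]
    have hql : q (J-1) ≤ t * r (J-1) := by
      rw [hqJ, hr_def]
      show ((2:ℝ)^J)⁻¹ ≤ t * (2:ℝ)^((2:ℝ)^(((J-1:ℕ):ℝ)+1) - (((J-1:ℕ):ℝ)+1))
      rw [hcast1]
      have hA : 1 ≤ t * (2:ℝ)^((2:ℝ)^((J:ℝ))) := by
        have h2L : (2:ℝ)^L ≤ (2:ℝ)^((2:ℝ)^((J:ℝ))) := by
          apply Real.rpow_le_rpow_of_exponent_le one_le_two
          rw [Real.rpow_natCast]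
          exact hJlow
        have hinv : (2:ℝ)^L = t⁻¹ := by
          rw [hL_def]
          exact Real.rpow_logb two_pos (by norm_num) (inv_pos.mpr ht)
        calc (1:ℝ) = t * t⁻¹ := (mul_inv_cancel₀ (ne_of_gt ht)).symm
          _ ≤ t * (2:ℝ)^((2:ℝ)^((J:ℝ))) := by
              rw [← hinv]
              exact mul_le_mul_of_nonneg_left h2L ht.le
      rw [Real.rpow_sub two_pos, div_eq_mul_inv, ← mul_assoc]
      calc ((2:ℝ)^J)⁻¹ = 1 * ((2:ℝ)^((J:ℝ)))⁻¹ := by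
            rw [Real.rpow_natCast]; ring
        _ ≤ (t * (2:ℝ)^((2:ℝ)^((J:ℝ)))) * ((2:ℝ)^((J:ℝ)))⁻¹ :=
            mul_le_mul_of_nonneg_right hA (by positivity)
    rw [hf_def]
    show min (q (J-1)) (t * r (J-1)) = ((2:ℝ)^J)⁻¹
    rw [min_eq_left hql, hqJ]
  constructor
  · -- lower bound
    have h1 : f (J-1) ≤ ∑' i, f i := Summable.le_tsum hsum _ (fun j _ => hf_nonneg j)
    have h3 : (2:ℝ)^J ≤ 100*ℓ := by
      have := Real.log_two_gt_d9
      nlinarith [hLℓ, hL0, hℓ1]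
    have h4 : (100:ℝ)⁻¹/ℓ ≤ ((2:ℝ)^J)⁻¹ := by
      rw [show (100:ℝ)⁻¹/ℓ = (100*ℓ)⁻¹ by field_simp]
      exact inv_anti₀ h2Jpos h3
    rw [hfJ] at h1
    linarith
  · -- upper bound
    by_cases hcase : ℓ ≤ 100
    · have h1 : ∑' i, f i ≤ 1 := by
        calc ∑' i, f i ≤ ∑' i, ((1:ℝ)/2)^(i+1) :=
            Summable.tsum_le_tsum (fun i => (hf_le_q i).trans (hq_eq i).le) hsum hgeom
          _ = 1 := hgeom_sum
      have h2 : (1:ℝ) ≤ 100/ℓ := by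
        rw [le_div_iff₀ hℓpos]; linarith
      linarith
    · push_neg at hcase
      have hlog2_lt : Real.log 2 < 0.6931471808 := Real.log_two_lt_d9
      have hLlarge : 99 ≤ L * Real.log 2 := by
        rw [hLℓ] at hcase; linarith
      have hL142 : 142 ≤ L := by nlinarith
      have hℓL : ℓ ≤ L := by nlinarith [hLℓ]
      have hLpos : (0:ℝ) < L := by linarith
      rw [← Summable.sum_add_tsum_nat_add (J-1) hsum]
      have htail : ∑' i, f (i + (J-1)) ≤ 2/ℓ := by
        have h1 : ∑' i, f (i + (J-1)) ≤ ∑' i : ℕ, ((1:ℝ)/2)^(i + (J-1) + 1) := by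
          apply Summable.tsum_le_tsum (fun i => (hf_le_q _).trans (hq_eq _).le)
            ((summable_nat_add_iff (J-1)).mpr hsum)
            ((summable_nat_add_iff (f := fun i : ℕ => ((1:ℝ)/2)^(i+1)) (J-1)).mpr hgeom)
        have h2 : ∑' i : ℕ, ((1:ℝ)/2)^(i + (J-1) + 1) = ((1:ℝ)/2)^(J-1) := by
          have h6 : ∀ i : ℕ, ((1:ℝ)/2)^(i + (J-1) + 1) = ((1:ℝ)/2)^(J-1) * ((1:ℝ)/2)^(i+1) := by
            intro i
            rw [← pow_add]
            congr 1
            omega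
          rw [tsum_congr h6, tsum_mul_left, hgeom_sum, mul_one]
        have h3 : ((1:ℝ)/2)^(J-1) ≤ 2/L := by
          have h7 : (2:ℝ)^J = 2 * (2:ℝ)^(J-1) := by
            rw [← pow_succ']
            congr 1
            omega
          have h8 : ((1:ℝ)/2)^(J-1) = 2 / (2:ℝ)^J := by
            rw [div_pow, one_pow, h7]
            field_simp
          rw [h8]
          exact div_le_div_of_nonneg_left (by norm_num) hLpos hJlow
        have h4 : (2:ℝ)/L ≤ 2/ℓ := div_le_div_of_nonneg_left (by norm_num) hℓpos hℓL
        linarith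
      have hhead : ∑ i ∈ Finset.range (J-1), f i ≤ 8/ℓ := by
        cases hm : J - 1 with
        | zero =>
          simp only [Finset.range_zero, Finset.sum_empty]
          positivity
        | succ m =>
          have hr_nat : ∀ i : ℕ, r i = (2:ℝ)^((2^(i+1) - (i+1) : ℕ)) := by
            intro i
            rw [hr_def]
            show (2:ℝ)^((2:ℝ)^((i:ℝ)+1) - ((i:ℝ)+1)) = (2:ℝ)^((2^(i+1) - (i+1) : ℕ))
            rw [← Real.rpow_natCast 2 (2^(i+1) - (i+1))]
            congr 1
            have hle : i+1 ≤ 2^(i+1) := (Nat.lt_two_pow_self (n := i+1)).le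
            rw [Nat.cast_sub hle]
            push_cast
            rw [show ((i:ℝ)+1) = ((i+1:ℕ):ℝ) by push_cast; ring, Real.rpow_natCast]
            try push_cast
            try ring
          have h1 : ∀ i, f i ≤ t * (2:ℝ)^((2^(i+1) - (i+1) : ℕ)) := fun i => by
            rw [← hr_nat i]; exact min_le_right _ _
          have hJm : J = m + 2 := by omega
          -- arithmetic pieces
          have hmle : m+1 ≤ 2^(m+1) := (Nat.lt_two_pow_self (n := m+1)).le
          have hpow_split : (2:ℝ)^((2^(m+1) - (m+1) : ℕ)) =
              (2:ℝ)^((2^(m+1) : ℕ)) / (2:ℝ)^(m+1) := by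
            rw [eq_div_iff (by positivity), ← pow_add]
            congr 1
            omega
          have h2J : (2:ℝ)^J = 2 * (2:ℝ)^(m+1) := by rw [hJm]; ring
          have hr1 : ((2:ℕ)^(m+1) : ℝ) ≤ L + 1 := by push_cast; linarith
          have hstep1 : t * (2:ℝ)^((2^(m+1):ℕ)) ≤ 2 := by
            have h5 : (2:ℝ)^(((2^(m+1):ℕ)):ℝ) ≤ (2:ℝ)^(L+1) := by
              apply Real.rpow_le_rpow_of_exponent_le one_le_two
              push_cast at hr1 ⊢
              exact hr1
            rw [Real.rpow_natCast] at h5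
            have h2L1 : (2:ℝ)^(L+1) = 2 * t⁻¹ := by
              rw [Real.rpow_add two_pos, Real.rpow_one, hL_def,
                Real.rpow_logb two_pos (by norm_num) (inv_pos.mpr ht)]
              ring
            calc t * (2:ℝ)^((2^(m+1):ℕ)) ≤ t * (2 * t⁻¹) :=
                mul_le_mul_of_nonneg_left (h5.trans_eq h2L1) ht.le
              _ = 2 := by field_simp
          have hstep2 : L/2 ≤ (2:ℝ)^(m+1) := by linarith
          calc ∑ i ∈ Finset.range (m+1), f i
              ≤ ∑ i ∈ Finset.range (m+1), t * (2:ℝ)^((2^(i+1) - (i+1) : ℕ)) :=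
                Finset.sum_le_sum (fun i _ => h1 i)
            _ = t * ∑ i ∈ Finset.range (m+1), (2:ℝ)^((2^(i+1) - (i+1) : ℕ)) := by
                rw [Finset.mul_sum]
            _ ≤ t * (2 * 2^((2^(m+1) - (m+1) : ℕ))) :=
                mul_le_mul_of_nonneg_left (headsum m) ht.le
            _ = 2 * (t * (2:ℝ)^((2^(m+1):ℕ))) / (2:ℝ)^(m+1) := by
                rw [hpow_split]; ring
            _ ≤ 2 * 2 / (L/2) := by
                apply div_le_div₀ (by norm_num) (by nlinarith) (by linarith) hstep2
            _ = 8/L := by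
                rw [div_div_eq_mul_div]
                norm_num
            _ ≤ 8/ℓ := by gcongr <;> linarith
      have hfinal : (8:ℝ)/ℓ + 2/ℓ ≤ 100/ℓ := by
        rw [← add_div]
        gcongr <;> norm_num
      linarith


/-- Let `(h_k)_{k≥1}` be pairwise disjoint measurable subsets of `(0,1)` with
`λ(h_k) = 2^{-k-2^k}`, and `x = ∑_{k≥1} 2^{2^k} χ_{h_k}`. Then
`∫₀¹ min{x(s), t x(s)²} ds ∼ 1/log(e/t)` for `0 < t ≤ 1`. -/
theorem sharpness_integral_x
    (h : ℕ → Set ℝ)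
    (hmeas : ∀ k, MeasurableSet (h k))
    (hsub : ∀ k, h k ⊆ Ioo (0:ℝ) 1)
    (hdisj : Pairwise (Function.onFun Disjoint h))
    (hvol : ∀ k : ℕ, 1 ≤ k →
      volume (h k) = ENNReal.ofReal ((2:ℝ) ^ (-(k:ℝ) - (2:ℝ) ^ (k:ℝ))))
    (x : ℝ → ℝ)
    (hx : ∀ s, x s =
      ∑' k : ℕ, (2:ℝ) ^ ((2:ℝ) ^ ((k:ℝ) + 1)) * (h (k + 1)).indicator (fun _ => (1:ℝ)) s) :
    ∃ C > (0:ℝ), ∀ t : ℝ, 0 < t → t ≤ 1 →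
      C⁻¹ / Real.log (Real.exp 1 / t) ≤ (∫ s in Ioo (0:ℝ) 1, min (x s) (t * x s ^ 2)) ∧
        (∫ s in Ioo (0:ℝ) 1, min (x s) (t * x s ^ 2)) ≤ C / Real.log (Real.exp 1 / t) := by
  refine ⟨100, by norm_num, fun t ht ht1 => ?_⟩
  rw [key_eq h hmeas hsub hdisj hvol x hx t ht]
  exact tsum_bounds t ht ht1
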